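/- For every real α < 1, every natural number n, and every real number x: (x)_{n↑} = ∑_{k=0}^{n} S_{n,k}^{-1,-α} · (x)_{k↑α}, i.e. the explicitly defined composition sums S_{n,k}^{-1,-α} are the connection coefficients between the rising factorials with increment 1 and increment α. -/
import Mathlib

noncomputable def risefac (x h : ℝ) (n : ℕ) : ℝ := ∏ i ∈ Finset.range n, (x + i * h)

noncomputable def genStirling (α : ℝ) (n k : ℕ) : ℝ :=
  ((n.factorial : ℝ) / k.factorial) *
    ∑ f ∈ (Finset.Nat.antidiagonalTuple k n).filter (fun f => ∀ i, 0 < f i),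
      ∏ j, risefac (1 - α) 1 (f j - 1) / (f j).factorial

noncomputable def Cc (α : ℝ) : ℕ → ℝ
  | 0 => 0
  | (m+1) => risefac (1 - α) 1 m / (m+1).factorial

noncomputable def Tt (α : ℝ) (n k : ℕ) : ℝ :=
  ∑ f ∈ Finset.Nat.antidiagonalTuple k n, ∏ j, Cc α (f j)

lemma risefac_zero (x h : ℝ) : risefac x h 0 = 1 := by simp [risefac]

lemma risefac_succ (x h : ℝ) (n : ℕ) :
    risefac x h (n+1) = risefac x h n * (x + n * h) := Finset.prod_range_succ _ _

lemma Cc_one (α : ℝ) : Cc α 1 = 1 := by simp [Cc, risefac]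

lemma Cc_pos_eq (α : ℝ) {m : ℕ} (hm : 0 < m) :
    Cc α m = risefac (1 - α) 1 (m - 1) / m.factorial := by
  cases m with
  | zero => omega
  | succ m => rfl

lemma mulCc (α : ℝ) (m : ℕ) :
    (m:ℝ) * Cc α m = ((m:ℝ) - 1 - α) * Cc α (m-1) + (if m = 1 then 1 else 0) := by
  match m with
  | 0 => simp [Cc]
  | 1 => simp [Cc_one, Cc, risefac]
  | (m+2) =>
    simp only [Cc, Nat.add_sub_cancel, if_neg (by omega : ¬ m + 2 = 1), add_zero]
    rw [risefac_succ]
    have h1 : ((m+2).factorial : ℝ) = ((m:ℝ)+2) * (m+1).factorial := by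
      push_cast [Nat.factorial_succ]; ring
    have h2 : ((m+1).factorial : ℝ) ≠ 0 := Nat.cast_ne_zero.mpr (Nat.factorial_ne_zero _)
    have h3 : ((m:ℝ)+2) ≠ 0 := by positivity
    rw [h1]
    push_cast
    field_simp
    ring

lemma genStirling_eq (α : ℝ) (n k : ℕ) :
    genStirling α n k = ((n.factorial : ℝ) / k.factorial) * Tt α n k := by
  unfold genStirling Tt
  congr 1
  have h1 : ∑ f ∈ (Finset.Nat.antidiagonalTuple k n).filter (fun f => ∀ i, 0 < f i),
      ∏ j, Cc α (f j) = ∑ f ∈ Finset.Nat.antidiagonalTuple k n, ∏ j, Cc α (f j) := by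
    refine Finset.sum_filter_of_ne fun f _ hf i => ?_
    by_contra h
    exact hf (Finset.prod_eq_zero (Finset.mem_univ i)
      (by rw [Nat.eq_zero_of_not_pos h]; rfl))
  rw [← h1]
  exact Finset.sum_congr rfl fun f hf => Finset.prod_congr rfl fun j _ =>
    (Cc_pos_eq α ((Finset.mem_filter.mp hf).2 j)).symm

lemma Tt_rec (α : ℝ) (n k : ℕ) :
    ((n:ℝ)+1) * Tt α (n+1) (k+1) =
      ((n:ℝ) - ((k:ℝ)+1)*α) * Tt α n (k+1) + ((k:ℝ)+1) * Tt α n k := by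
  classical
  set A := Finset.Nat.antidiagonalTuple (k+1) (n+1) with hA
  set B := Finset.Nat.antidiagonalTuple (k+1) n with hB
  -- step 1
  have step1 : ((n:ℝ)+1) * Tt α (n+1) (k+1)
      = ∑ f ∈ A, ∑ j : Fin (k+1), (f j : ℝ) * ∏ i, Cc α (f i) := by
    rw [Tt, Finset.mul_sum]
    refine Finset.sum_congr rfl fun f hf => ?_
    have hs : ∑ j, (f j : ℝ) = (n:ℝ)+1 := by
      have h := congrArg (Nat.cast : ℕ → ℝ) (Finset.Nat.mem_antidiagonalTuple.mp hf)
      push_cast at h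
      exact h
    rw [← Finset.sum_mul, hs]
  -- step 2: local expansion
  have step2 : ∀ (f : Fin (k+1) → ℕ) (j : Fin (k+1)),
      (f j : ℝ) * ∏ i, Cc α (f i)
        = ((f j:ℝ) - 1 - α) * Cc α (f j - 1) * ∏ i ∈ Finset.univ.erase j, Cc α (f i)
          + (if f j = 1 then ∏ i ∈ Finset.univ.erase j, Cc α (f i) else 0) := by
    intro f j
    rw [← Finset.mul_prod_erase _ _ (Finset.mem_univ j), ← mul_assoc, mulCc]
    by_cases h : f j = 1 <;> simp [h] <;> ring
  -- part A : per j
  have partA : ∀ j : Fin (k+1),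
      ∑ f ∈ A, ((f j:ℝ) - 1 - α) * Cc α (f j - 1) * ∏ i ∈ Finset.univ.erase j, Cc α (f i)
        = ∑ g ∈ B, ((g j:ℝ) - α) * ∏ i, Cc α (g i) := by
    intro j
    rw [← Finset.sum_filter_of_ne (p := fun f : Fin (k+1) → ℕ => 0 < f j)
      (fun f _ hf => by
        by_contra h
        apply hf
        rw [Nat.eq_zero_of_not_pos h]
        simp [Cc])]
    refine Finset.sum_bij' (fun f _ => Function.update f j (f j - 1))
      (fun g _ => Function.update g j (g j + 1)) ?_ ?_ ?_ ?_ ?_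
    · intro f hf
      rw [Finset.mem_filter] at hf
      obtain ⟨hfA, hfj⟩ := hf
      rw [hB, Finset.Nat.mem_antidiagonalTuple]
      have h1 := Finset.Nat.mem_antidiagonalTuple.mp hfA
      rw [Finset.sum_update_of_mem (Finset.mem_univ j)]
      rw [← Finset.add_sum_erase _ _ (Finset.mem_univ j)] at h1
      rw [Finset.sdiff_singleton_eq_erase]
      omega
    · intro g hg
      rw [Finset.mem_filter]
      constructor
      · rw [hA, Finset.Nat.mem_antidiagonalTuple]
        have h1 := Finset.Nat.mem_antidiagonalTuple.mp hg
        rw [Finset.sum_update_of_mem (Finset.mem_univ j)]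
        rw [← Finset.add_sum_erase _ _ (Finset.mem_univ j)] at h1
        rw [Finset.sdiff_singleton_eq_erase]
        omega
      · simp
    · intro f hf
      rw [Finset.mem_filter] at hf
      have h : f j - 1 + 1 = f j := Nat.succ_pred_eq_of_pos hf.2
      simp only [Function.update_idem, Function.update_self, h, Function.update_eq_self]
    · intro g hg
      simp only [Function.update_idem, Function.update_self, Nat.add_sub_cancel,
        Function.update_eq_self]
    · intro f hf
      rw [Finset.mem_filter] at hf
      have h2 : ((f j - 1 : ℕ) : ℝ) = (f j : ℝ) - 1 := by
        rw [Nat.cast_sub hf.2]; norm_num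
      have h3 : ∏ i, Cc α (Function.update f j (f j - 1) i)
          = Cc α (f j - 1) * ∏ i ∈ Finset.univ.erase j, Cc α (f i) := by
        rw [← Finset.mul_prod_erase _ _ (Finset.mem_univ j), Function.update_self]
        congr 1
        exact Finset.prod_congr rfl fun i hi => by
          rw [Function.update_of_ne (Finset.ne_of_mem_erase hi)]
      show ((f j:ℝ) - 1 - α) * Cc α (f j - 1) * ∏ i ∈ Finset.univ.erase j, Cc α (f i)
          = (((Function.update f j (f j - 1) j : ℕ) : ℝ) - α)
              * ∏ i, Cc α (Function.update f j (f j - 1) i)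
      rw [h3, Function.update_self, h2]
      ring
  -- part B : per j
  have partB : ∀ j : Fin (k+1),
      ∑ f ∈ A, (if f j = 1 then ∏ i ∈ Finset.univ.erase j, Cc α (f i) else 0)
        = Tt α n k := by
    intro j
    rw [Finset.sum_ite, Finset.sum_const_zero, add_zero, Tt]
    refine Finset.sum_bij' (fun f _ => Fin.removeNth j f)
      (fun g _ => Fin.insertNth j 1 g) ?_ ?_ ?_ ?_ ?_
    · intro f hf
      rw [Finset.mem_filter] at hf
      rw [Finset.Nat.mem_antidiagonalTuple]
      have h1 := Finset.Nat.mem_antidiagonalTuple.mp hf.1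
      rw [Fin.sum_univ_succAbove f j, hf.2] at h1
      simp only [Fin.removeNth]
      omega
    · intro g hg
      rw [Finset.mem_filter]
      refine ⟨?_, by simp⟩
      rw [hA, Finset.Nat.mem_antidiagonalTuple]
      have h1 := Finset.Nat.mem_antidiagonalTuple.mp hg
      rw [Fin.sum_univ_succAbove (Fin.insertNth j 1 g) j]
      simp only [Fin.insertNth_apply_same, Fin.insertNth_apply_succAbove, h1]
      omega
    · intro f hf
      rw [Finset.mem_filter] at hf
      have h := Fin.insertNth_self_removeNth j f
      rw [hf.2] at h
      exact h
    · intro g hg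
      funext i
      simp [Fin.removeNth]
    · intro f hf
      rw [Finset.mem_filter] at hf
      have hP : ∏ i, Cc α (f i) = Cc α (f j) * ∏ i ∈ Finset.univ.erase j, Cc α (f i) :=
        (Finset.mul_prod_erase _ _ (Finset.mem_univ j)).symm
      have hQ : ∏ i, Cc α (f i) = Cc α (f j) * ∏ i : Fin k, Cc α (f (j.succAbove i)) :=
        Fin.prod_univ_succAbove (fun i => Cc α (f i)) j
      rw [hf.2, Cc_one, one_mul] at hP hQ
      rw [← hP, hQ]
      rfl
  -- assemble
  rw [step1]
  calc ∑ f ∈ A, ∑ j : Fin (k+1), (f j : ℝ) * ∏ i, Cc α (f i)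
      = ∑ j : Fin (k+1), ∑ f ∈ A,
          (((f j:ℝ) - 1 - α) * Cc α (f j - 1) * ∏ i ∈ Finset.univ.erase j, Cc α (f i)
            + (if f j = 1 then ∏ i ∈ Finset.univ.erase j, Cc α (f i) else 0)) := by
        rw [Finset.sum_comm]
        exact Finset.sum_congr rfl fun j _ => Finset.sum_congr rfl fun f _ => step2 f j
    _ = (∑ j : Fin (k+1), ∑ g ∈ B, ((g j:ℝ) - α) * ∏ i, Cc α (g i))
          + ∑ j : Fin (k+1), Tt α n k := by
        rw [← Finset.sum_add_distrib]
        exact Finset.sum_congr rfl fun j _ => by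
          rw [Finset.sum_add_distrib, partA j, partB j]
    _ = ((n:ℝ) - ((k:ℝ)+1)*α) * Tt α n (k+1) + ((k:ℝ)+1) * Tt α n k := by
        congr 1
        · rw [Finset.sum_comm, Tt, Finset.mul_sum]
          refine Finset.sum_congr rfl fun g hg => ?_
          rw [← Finset.sum_mul]
          congr 1
          have hs : ∑ i, (g i : ℝ) = (n:ℝ) := by
            have h := congrArg (Nat.cast : ℕ → ℝ) (Finset.Nat.mem_antidiagonalTuple.mp hg)
            push_cast at h
            exact h
          rw [Finset.sum_sub_distrib, hs, Finset.sum_const, Finset.card_univ]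
          push_cast [Fintype.card_fin, nsmul_eq_mul]
          ring
        · rw [Finset.sum_const, Finset.card_univ]
          push_cast [Fintype.card_fin, nsmul_eq_mul]
          ring

lemma genStirling_zero_zero (α : ℝ) : genStirling α 0 0 = 1 := by
  unfold genStirling
  rw [Finset.Nat.antidiagonalTuple_zero_right]
  simp

lemma genStirling_succ_zero (α : ℝ) (n : ℕ) : genStirling α (n+1) 0 = 0 := by
  unfold genStirling
  have : Finset.Nat.antidiagonalTuple 0 (n+1) = (∅ : Finset (Fin 0 → ℕ)) := by
    refine Finset.eq_empty_of_forall_notMem fun f hf => ?_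
    have := Finset.Nat.mem_antidiagonalTuple.mp hf
    simp at this
  rw [this]
  simp

lemma genStirling_of_lt (α : ℝ) {n k : ℕ} (h : n < k) : genStirling α n k = 0 := by
  unfold genStirling
  have : (Finset.Nat.antidiagonalTuple k n).filter (fun f => ∀ i, 0 < f i)
      = (∅ : Finset (Fin k → ℕ)) := by
    refine Finset.eq_empty_of_forall_notMem fun f hf => ?_
    rw [Finset.mem_filter] at hf
    have h1 := Finset.Nat.mem_antidiagonalTuple.mp hf.1
    have h2 := Finset.card_nsmul_le_sum Finset.univ f 1 (fun i _ => hf.2 i)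
    rw [h1, Finset.card_univ, Fintype.card_fin, smul_eq_mul, mul_one] at h2
    omega
  rw [this]
  simp

lemma genStirling_rec (α : ℝ) (n k : ℕ) :
    genStirling α (n+1) (k+1)
      = genStirling α n k + ((n:ℝ) - ((k:ℝ)+1)*α) * genStirling α n (k+1) := by
  rw [genStirling_eq, genStirling_eq, genStirling_eq]
  have h1 : ((n+1).factorial : ℝ) = ((n:ℝ)+1) * n.factorial := by
    push_cast [Nat.factorial_succ]; ring
  have h2 : ((k+1).factorial : ℝ) = ((k:ℝ)+1) * k.factorial := by
    push_cast [Nat.factorial_succ]; ring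
  have hrec := Tt_rec α n k
  have hn : ((n:ℝ)+1) ≠ 0 := by positivity
  have hk : ((k:ℝ)+1) ≠ 0 := by positivity
  have hkf : (k.factorial : ℝ) ≠ 0 := Nat.cast_ne_zero.mpr k.factorial_ne_zero
  have hnf : (n.factorial : ℝ) ≠ 0 := Nat.cast_ne_zero.mpr n.factorial_ne_zero
  have hT : Tt α (n+1) (k+1)
      = (((n:ℝ) - ((k:ℝ)+1)*α) * Tt α n (k+1) + ((k:ℝ)+1) * Tt α n k)/((n:ℝ)+1) := by
    rw [eq_div_iff hn]
    linear_combination hrec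
  rw [h1, h2, hT]
  field_simp
  ring

/-- `(x)_{n↑} = ∑_{k=0}^n S_{n,k}^{-1,-α} (x)_{k↑α}`: the generalized Stirling numbers
are the connection coefficients between rising factorials with increments 1 and α. -/
theorem risefac_eq_sum_genStirling (α : ℝ) (hα : α < 1) (n : ℕ) (x : ℝ) :
    risefac x 1 n = ∑ k ∈ Finset.range (n + 1), genStirling α n k * risefac x α k := by
  induction n with
  | zero => simp [risefac_zero, genStirling_zero_zero]
  | succ n ih =>
    have hstep : risefac x 1 (n+1) = risefac x 1 n * (x + n) := by
      rw [risefac_succ]; ring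
    rw [hstep, ih, Finset.sum_mul]
    have expand : ∀ k ∈ Finset.range (n+1), genStirling α n k * risefac x α k * (x + n)
        = genStirling α n k * risefac x α (k+1)
          + (((n:ℝ) - (k:ℝ)*α) * genStirling α n k) * risefac x α k := by
      intro k _
      rw [risefac_succ]
      ring
    rw [Finset.sum_congr rfl expand, Finset.sum_add_distrib]
    rw [Finset.sum_range_succ' (fun k => genStirling α (n+1) k * risefac x α k) (n+1)]
    rw [genStirling_succ_zero, zero_mul, add_zero]
    have expand2 : ∀ i ∈ Finset.range (n+1),
        genStirling α (n+1) (i+1) * risefac x α (i+1)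
          = genStirling α n i * risefac x α (i+1)
            + (((n:ℝ) - ((i:ℝ)+1)*α) * genStirling α n (i+1)) * risefac x α (i+1) := by
      intro i _
      rw [genStirling_rec]
      ring
    rw [Finset.sum_congr rfl expand2, Finset.sum_add_distrib]
    congr 1
    rw [Finset.sum_range_succ' (fun k => ((n:ℝ) - (k:ℝ)*α) * genStirling α n k * risefac x α k) n]
    rw [Finset.sum_range_succ (fun i => ((n:ℝ) - ((i:ℝ)+1)*α) * genStirling α n (i+1) * risefac x α (i+1)) n]
    have hz1 : ((n:ℝ) - ((0:ℕ):ℝ)*α) * genStirling α n 0 * risefac x α 0 = 0 := by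
      cases n with
      | zero => simp [genStirling_zero_zero]
      | succ m => simp [genStirling_succ_zero]
    have hz2 : ((n:ℝ) - (((n:ℕ):ℝ)+1)*α) * genStirling α n (n+1) * risefac x α (n+1) = 0 := by
      rw [genStirling_of_lt α (Nat.lt_succ_self n)]
      ring
    rw [hz2, hz1]
    push_cast
    ring
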